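/- Let K = {1,...,k} with k ≥ 1, and for b^k ∈ {0,1}^k define S(b^k) ⊆ {0,1}^{k+1} as {(1,b^k)} ∪ {(0, b'^k) : b'^k ∈ {0,1}^k, b'^k ≠ b^k}. Then the convex hull of S(b^k) in R^{k+1} equals the polytope P(b^k) defined by: v_0 ≥ 0; v_j ≥ 0 for j with b_j = 0; v_j ≤ 1 for j with b_j = 1; v_0 + (−1)^{b_j} v_j ≤ 1 − b_j for all j ∈ K; and v_0 + Σ_{j∈K} (−1)^{b_j} v_j ≥ 1 − Σ_{j∈K} b_j. Moreover, every vertex of P(b^k) is integral. -/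

import Mathlib

open Finset

/-- The polytope `P(b^k)` defined by the inequalities of the paper; points are
`v = (v_0, (v_1, ..., v_k))` and `(−1)^{b_j}` is written `1 − 2·b_j` for `b_j ∈ {0,1}`. -/
def Pbk {k : ℕ} (b : Fin k → ℝ) : Set (ℝ × (Fin k → ℝ)) :=
  {v | 0 ≤ v.1 ∧ (∀ j, b j = 0 → 0 ≤ v.2 j) ∧ (∀ j, b j = 1 → v.2 j ≤ 1) ∧
       (∀ j, v.1 + (1 - 2 * b j) * v.2 j ≤ 1 - b j) ∧
       1 - ∑ j, b j ≤ v.1 + ∑ j, (1 - 2 * b j) * v.2 j}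

/-- `S(b^k) = {(1,b^k)} ∪ {(0,u^k) : u^k ∈ {0,1}^k, u^k ≠ b^k}`. -/
def Sbk {k : ℕ} (b : Fin k → ℝ) : Set (ℝ × (Fin k → ℝ)) :=
  {w | w = (1, b) ∨
       ∃ u : Fin k → ℝ, (∀ j, u j = 0 ∨ u j = 1) ∧ u ≠ b ∧ w = (0, u)}


lemma core_hull {k : ℕ} (hk : 1 ≤ k) (w : Fin k → ℝ)
    (h0 : ∀ j, 0 ≤ w j) (h1 : ∀ j, w j ≤ 1) (hs : 1 ≤ ∑ j, w j) :
    w ∈ convexHull ℝ {u : Fin k → ℝ | (∀ j, u j = 0 ∨ u j = 1) ∧ u ≠ 0} := by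
  have hcube : w ∈ convexHull ℝ (Set.univ.pi fun _ : Fin k => ({0, 1} : Set ℝ)) := by
    apply mem_convexHull_pi
    intro j _
    rw [convexHull_pair, segment_eq_Icc zero_le_one]
    exact ⟨h0 j, h1 j⟩
  rw [_root_.convexHull_eq] at hcube
  obtain ⟨ι, t, c, z, hc0, hc1, hzc, hcm⟩ := hcube
  rw [Finset.centerMass_eq_of_sum_1 _ _ hc1] at hcm
  -- entries of z i are 0 or 1
  have hz01 : ∀ i ∈ t, ∀ j, z i j = 0 ∨ z i j = 1 := by
    intro i hi j
    have := hzc i hi j (Set.mem_univ j)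
    simpa using this
  have hw : ∀ j, w j = ∑ i ∈ t, c i * z i j := by
    intro j
    rw [← hcm]
    simp [Finset.sum_apply]
  set c0 : ℝ := ∑ i ∈ t, (if z i = 0 then c i else 0) with hc0def
  set E : ℝ := ∑ i ∈ t, (if z i = 0 then 0 else c i * ((∑ j, z i j) - 1)) with hEdef
  have hc0nn : 0 ≤ c0 := Finset.sum_nonneg fun i hi => by
    split <;> simp [hc0 i hi]
  have hEc0 : c0 ≤ E := by
    have key : E - c0 = (∑ j, w j) - 1 := by
      have : E - c0 = ∑ i ∈ t, c i * ((∑ j, z i j) - 1) := by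
        rw [hEdef, hc0def, ← Finset.sum_sub_distrib]
        apply Finset.sum_congr rfl
        intro i hi
        by_cases h : z i = 0
        · simp [h]
        · simp [h]
      rw [this]
      have : ∑ i ∈ t, c i * ((∑ j, z i j) - 1) = (∑ j, ∑ i ∈ t, c i * z i j) - 1 := by
        rw [Finset.sum_comm]
        simp [mul_sub, Finset.sum_sub_distrib, Finset.mul_sum, hc1]
      rw [this]
      congr 1
      exact (Finset.sum_congr rfl fun j _ => (hw j).symm)
    linarith
  have hEnn : 0 ≤ E := le_trans hc0nn hEc0
  set T : ℝ := if E = 0 then 0 else c0 / E with hTdef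
  have hT0 : 0 ≤ T := by
    rw [hTdef]; split
    · exact le_refl 0
    · positivity
  have hT1 : T ≤ 1 := by
    rw [hTdef]; split
    · exact zero_le_one
    · rw [div_le_one (lt_of_le_of_ne hEnn (Ne.symm ‹_›))]; exact hEc0
  have hTE : T * E = c0 := by
    rw [hTdef]; split
    · rename_i h; rw [h] at hEc0; linarith [hc0nn, hEc0]
    · field_simp
  -- the new combination
  classical
  set W : ι × Option (Fin k) → ℝ := fun p =>
    if z p.1 = 0 then 0 else
      match p.2 with
      | none => (1 - T) * c p.1
      | some j => T * c p.1 * z p.1 j with hWdef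
  set Z : ι × Option (Fin k) → (Fin k → ℝ) := fun p =>
    match p.2 with
    | none => if z p.1 = 0 then (Pi.single ⟨0, hk⟩ 1 : Fin k → ℝ) else z p.1
    | some j => Pi.single j 1 with hZdef
  have hWnn : ∀ p ∈ t ×ˢ (Finset.univ : Finset (Option (Fin k))), 0 ≤ W p := by
    rintro ⟨i, o⟩ hp
    have hi : i ∈ t := (Finset.mem_product.mp hp).1
    simp only [hWdef]
    split
    · exact le_refl 0
    · match o with
      | none => exact mul_nonneg (by linarith) (hc0 i hi)
      | some j =>
        rcases hz01 i hi j with h | h <;>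
          [simp [h]; exact mul_nonneg (mul_nonneg hT0 (hc0 i hi)) (by rw [h]; norm_num)]
  have hWsum : ∑ p ∈ t ×ˢ (Finset.univ : Finset (Option (Fin k))), W p = 1 := by
    rw [Finset.sum_product]
    have : ∀ i ∈ t, ∑ o : Option (Fin k), W (i, o) =
        (c i - if z i = 0 then c i else 0) + T * (if z i = 0 then 0 else c i * ((∑ j, z i j) - 1)) := by
      intro i hi
      rw [Fintype.sum_option]
      by_cases h : z i = 0
      · simp [hWdef, h]
      · simp only [hWdef, h, if_neg, if_false]
        rw [← Finset.mul_sum]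
        ring
    rw [Finset.sum_congr rfl this, Finset.sum_add_distrib, Finset.sum_sub_distrib,
      ← hc0def, ← Finset.mul_sum, ← hEdef, hc1, hTE]
    ring
  have hZmem : ∀ p ∈ t ×ˢ (Finset.univ : Finset (Option (Fin k))),
      Z p ∈ {u : Fin k → ℝ | (∀ j, u j = 0 ∨ u j = 1) ∧ u ≠ 0} := by
    rintro ⟨i, o⟩ hp
    have hi : i ∈ t := (Finset.mem_product.mp hp).1
    have hsingle : ∀ j : Fin k, (Pi.single j (1:ℝ) : Fin k → ℝ) ∈
        {u : Fin k → ℝ | (∀ j, u j = 0 ∨ u j = 1) ∧ u ≠ 0} := by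
      intro j
      constructor
      · intro j'
        rcases eq_or_ne j' j with rfl | h
        · right; simp
        · left; simp [Pi.single_apply, h]
      · intro h
        have := congrFun h j
        simp at this
    match o with
    | none =>
      simp only [hZdef]
      split
      · exact hsingle _
      · exact ⟨hz01 i hi, by assumption⟩
    | some j => exact hsingle j
  have key := Finset.centerMass_mem_convexHull (t ×ˢ (Finset.univ : Finset (Option (Fin k))))
    hWnn (by rw [hWsum]; norm_num) hZmem
  rw [Finset.centerMass_eq_of_sum_1 _ _ hWsum] at key
  have : ∑ p ∈ t ×ˢ (Finset.univ : Finset (Option (Fin k))), W p • Z p = w := by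
    funext j'
    rw [Finset.sum_apply]
    rw [Finset.sum_product]
    have : ∀ i ∈ t, ∑ o : Option (Fin k), (W (i, o) • Z (i, o)) j' = c i * z i j' := by
      intro i hi
      rw [Fintype.sum_option]
      by_cases h : z i = 0
      · simp [hWdef, h]
      · simp only [hWdef, hZdef, h, if_neg, if_false, Pi.smul_apply, smul_eq_mul]
        have : ∀ j : Fin k, T * c i * z i j * (Pi.single j (1:ℝ) : Fin k → ℝ) j'
            = if j = j' then T * c i * z i j else 0 := by
          intro j
          rcases eq_or_ne j j' with rfl | hne
          · simp
          · simp [Pi.single_apply, Ne.symm hne, hne]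
        rw [Finset.sum_congr rfl fun j _ => this j, Finset.sum_ite_eq' Finset.univ j'
          (fun j => T * c i * z i j)]
        simp
        ring
    rw [Finset.sum_congr rfl this]
    exact (hw j').symm
  rw [this] at key
  exact key

lemma convex_Pbk {k : ℕ} (b : Fin k → ℝ) : Convex ℝ (Pbk b) := by
  rintro x ⟨hx0, hx1, hx2, hx3, hx4⟩ y ⟨hy0, hy1, hy2, hy3, hy4⟩ a c ha hc hac
  have hfst : (a • x + c • y).1 = a * x.1 + c * y.1 := rfl
  have hsnd : ∀ j, (a • x + c • y).2 j = a * x.2 j + c * y.2 j := fun j => rfl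
  refine ⟨?_, ?_, ?_, ?_, ?_⟩
  · rw [hfst]; exact add_nonneg (mul_nonneg ha hx0) (mul_nonneg hc hy0)
  · intro j hbj; rw [hsnd]
    exact add_nonneg (mul_nonneg ha (hx1 j hbj)) (mul_nonneg hc (hy1 j hbj))
  · intro j hbj; rw [hsnd]
    nlinarith [hx2 j hbj, hy2 j hbj]
  · intro j; rw [hfst, hsnd]
    have h3 : a * (1 - b j) + c * (1 - b j) = 1 - b j := by linear_combination (1 - b j) * hac
    linarith [mul_le_mul_of_nonneg_left (hx3 j) ha, mul_le_mul_of_nonneg_left (hy3 j) hc, h3]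
  · have hsum : ∑ j, (1 - 2 * b j) * (a • x + c • y).2 j
        = a * (∑ j, (1 - 2 * b j) * x.2 j) + c * (∑ j, (1 - 2 * b j) * y.2 j) := by
      rw [Finset.mul_sum, Finset.mul_sum, ← Finset.sum_add_distrib]
      exact Finset.sum_congr rfl fun j _ => by rw [hsnd]; ring
    rw [hfst, hsum]
    have h3 : a * (1 - ∑ j, b j) + c * (1 - ∑ j, b j) = 1 - ∑ j, b j := by
      linear_combination (1 - ∑ j, b j) * hac
    linarith [mul_le_mul_of_nonneg_left hx4 ha, mul_le_mul_of_nonneg_left hy4 hc, h3]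

lemma Sbk_subset_Pbk {k : ℕ} (b : Fin k → ℝ) (hb : ∀ j, b j = 0 ∨ b j = 1) :
    Sbk b ⊆ Pbk b := by
  rintro v (rfl | ⟨u, hu, hub, rfl⟩)
  · refine ⟨zero_le_one, fun j hbj => by simp [hbj], fun j hbj => by simp [hbj], ?_, ?_⟩
    · intro j; rcases hb j with h | h <;> simp [h] <;> norm_num
    · have hterm : ∀ j, (1 - 2 * b j) * b j = -(b j) := fun j => by
        rcases hb j with h | h <;> simp [h] <;> norm_num
      rw [Finset.sum_congr rfl fun j _ => hterm j, Finset.sum_neg_distrib]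
      norm_num
  · refine ⟨le_refl 0, ?_, ?_, ?_, ?_⟩
    · intro j _; rcases hu j with h | h <;> simp [h]
    · intro j _; rcases hu j with h | h <;> simp [h]
    · intro j; rcases hb j with h | h <;> rcases hu j with h' | h' <;>
        simp [h, h'] <;> norm_num
    · have hg : ∀ j, (0:ℝ) ≤ (1 - 2 * b j) * u j + b j := by
        intro j; rcases hb j with h | h <;> rcases hu j with h' | h' <;>
          simp [h, h'] <;> norm_num
      obtain ⟨j0, hj0⟩ : ∃ j, u j ≠ b j := by
        by_contra h; push_neg at h; exact hub (funext h)
      have hg1 : (1:ℝ) ≤ (1 - 2 * b j0) * u j0 + b j0 := by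
        rcases hb j0 with h | h <;> rcases hu j0 with h' | h' <;>
          simp [h, h'] at hj0 ⊢ <;> norm_num
      have hge : (1:ℝ) ≤ ∑ j, ((1 - 2 * b j) * u j + b j) :=
        le_trans hg1 (Finset.single_le_sum (fun j _ => hg j) (Finset.mem_univ j0))
      rw [Finset.sum_add_distrib] at hge
      show (1:ℝ) - ∑ j, b j ≤ 0 + ∑ j, (1 - 2 * b j) * u j
      linarith

lemma map_hull {k : ℕ} (b : Fin k → ℝ) (hb : ∀ j, b j = 0 ∨ b j = 1)
    (u : Fin k → ℝ)
    (hu : u ∈ convexHull ℝ {u : Fin k → ℝ | (∀ j, u j = 0 ∨ u j = 1) ∧ u ≠ 0}) :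
    (((0:ℝ), fun j => b j + (1 - 2 * b j) * u j) : ℝ × (Fin k → ℝ)) ∈
      convexHull ℝ (Sbk b) := by
  have key : convexHull ℝ {u : Fin k → ℝ | (∀ j, u j = 0 ∨ u j = 1) ∧ u ≠ 0} ⊆
      {u : Fin k → ℝ | (((0:ℝ), fun j => b j + (1 - 2 * b j) * u j) : ℝ × (Fin k → ℝ)) ∈
        convexHull ℝ (Sbk b)} := by
    apply convexHull_min
    · rintro u ⟨hu01, hune⟩
      apply subset_convexHull
      right
      refine ⟨fun j => b j + (1 - 2 * b j) * u j, ?_, ?_, rfl⟩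
      · intro j
        rcases hb j with h | h <;> rcases hu01 j with h' | h' <;> simp [h, h'] <;> norm_num
      · intro hcon
        obtain ⟨j1, hj1⟩ : ∃ j, u j ≠ 0 := by
          by_contra h; push_neg at h; exact hune (funext h)
        have h1 : u j1 = 1 := (hu01 j1).resolve_left hj1
        have := congrFun hcon j1
        rcases hb j1 with h | h <;> rw [h, h1] at this <;> norm_num at this
    · rintro u1 hu1 u2 hu2 a c ha hc hac
      have heq : (((0:ℝ), fun j => b j + (1 - 2 * b j) * (a • u1 + c • u2) j) :
            ℝ × (Fin k → ℝ))
          = a • (((0:ℝ), fun j => b j + (1 - 2 * b j) * u1 j) : ℝ × (Fin k → ℝ))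
            + c • (((0:ℝ), fun j => b j + (1 - 2 * b j) * u2 j) : ℝ × (Fin k → ℝ)) := by
        refine Prod.ext ?_ ?_
        · simp
        · funext j
          simp only [Prod.snd_add, Prod.smul_snd, Pi.add_apply, Pi.smul_apply, smul_eq_mul]
          linear_combination (-(b j)) * hac
      show (((0:ℝ), fun j => b j + (1 - 2 * b j) * (a • u1 + c • u2) j) :
          ℝ × (Fin k → ℝ)) ∈ convexHull ℝ (Sbk b)
      rw [heq]
      exact (convex_convexHull ℝ (Sbk b)) hu1 hu2 ha hc hac
  exact key hu

lemma Pbk_subset_hull {k : ℕ} (hk : 1 ≤ k) (b : Fin k → ℝ)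
    (hb : ∀ j, b j = 0 ∨ b j = 1) : Pbk b ⊆ convexHull ℝ (Sbk b) := by
  rintro v ⟨hv0, hv1, hv2, hv3, hv4⟩
  have hbb : ∀ j, b j * b j = b j := fun j => by rcases hb j with h | h <;> simp [h]
  set w : Fin k → ℝ := fun j => (1 - 2 * b j) * (v.2 j - b j) with hwdef
  have hveq : ∀ j, v.2 j = b j + (1 - 2 * b j) * w j := by
    intro j
    simp only [hwdef]
    linear_combination (-4 * (v.2 j - b j)) * hbb j
  have hw0 : ∀ j, 0 ≤ w j := by
    intro j
    rcases hb j with h | h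
    · have := hv1 j h; simp only [hwdef, h]; norm_num; linarith
    · have := hv2 j h; simp only [hwdef, h]; norm_num; linarith
  have hw1 : ∀ j, v.1 + w j ≤ 1 := by
    intro j
    have h3 := hv3 j
    have hB := hbb j
    simp only [hwdef]
    nlinarith [h3, hB]
  have hwsum : 1 - v.1 ≤ ∑ j, w j := by
    have hterm : ∀ j, (1 - 2 * b j) * v.2 j = w j - b j := by
      intro j
      simp only [hwdef]
      linear_combination (-2) * hbb j
    rw [Finset.sum_congr rfl fun j _ => hterm j, Finset.sum_sub_distrib] at hv4
    linarith
  have hv1le : v.1 ≤ 1 := by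
    have := hw1 ⟨0, hk⟩
    have := hw0 ⟨0, hk⟩
    linarith
  rcases eq_or_lt_of_le hv1le with heq1 | hlt1
  · -- v.1 = 1, so w = 0 and v = (1, b)
    have hw00 : ∀ j, w j = 0 := fun j => le_antisymm (by have := hw1 j; linarith) (hw0 j)
    have : v = (1, b) := by
      refine Prod.ext heq1 (funext fun j => ?_)
      rw [hveq j, hw00 j]; ring
    rw [this]
    exact subset_convexHull ℝ _ (Or.inl rfl)
  · have hd : (0:ℝ) < 1 - v.1 := by linarith
    have hne : (1:ℝ) - v.1 ≠ 0 := ne_of_gt hd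
    set w' : Fin k → ℝ := fun j => (1 - v.1)⁻¹ * w j with hw'def
    have hw'0 : ∀ j, 0 ≤ w' j := fun j => mul_nonneg (by positivity) (hw0 j)
    have hw'1 : ∀ j, w' j ≤ 1 := by
      intro j
      show (1 - v.1)⁻¹ * w j ≤ 1
      rw [← div_eq_inv_mul, div_le_one hd]
      have := hw1 j; linarith
    have hw's : 1 ≤ ∑ j, w' j := by
      have : ∑ j, w' j = (1 - v.1)⁻¹ * ∑ j, w j := by
        rw [Finset.mul_sum]
      rw [this, ← div_eq_inv_mul, le_div_iff₀ hd]
      linarith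
    have hF := map_hull b hb w' (core_hull hk w' hw'0 hw'1 hw's)
    have h1b : ((1:ℝ), b) ∈ convexHull ℝ (Sbk b) :=
      subset_convexHull ℝ _ (Or.inl rfl)
    have hcomb : v.1 • (((1:ℝ), b) : ℝ × (Fin k → ℝ))
        + (1 - v.1) • (((0:ℝ), fun j => b j + (1 - 2 * b j) * w' j) : ℝ × (Fin k → ℝ))
          ∈ convexHull ℝ (Sbk b) :=
      (convex_convexHull ℝ (Sbk b)) h1b hF hv0 (by linarith) (by ring)
    have hveq2 : v.1 • (((1:ℝ), b) : ℝ × (Fin k → ℝ))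
        + (1 - v.1) • (((0:ℝ), fun j => b j + (1 - 2 * b j) * w' j) : ℝ × (Fin k → ℝ)) = v := by
      refine Prod.ext ?_ ?_
      · simp
      · funext j
        simp only [Prod.snd_add, Prod.smul_snd, Pi.add_apply, Pi.smul_apply, smul_eq_mul]
        have hww : (1 - v.1) * w' j = w j := by
          rw [hw'def]; field_simp
        rw [hveq j]
        linear_combination (1 - 2 * b j) * hww
    rw [hveq2] at hcomb
    exact hcomb

theorem stmt10 {k : ℕ} (hk : 1 ≤ k) (b : Fin k → ℝ) (hb : ∀ j, b j = 0 ∨ b j = 1) :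
    convexHull ℝ (Sbk b) = Pbk b ∧
    ∀ v ∈ Set.extremePoints ℝ (Pbk b),
      (∃ m : ℤ, v.1 = (m : ℝ)) ∧ ∀ j, ∃ m : ℤ, v.2 j = (m : ℝ) := by
  have hhull : convexHull ℝ (Sbk b) = Pbk b :=
    Set.Subset.antisymm (convexHull_min (Sbk_subset_Pbk b hb) (convex_Pbk b))
      (Pbk_subset_hull hk b hb)
  refine ⟨hhull, ?_⟩
  intro v hv
  rw [← hhull] at hv
  have hvS : v ∈ Sbk b := extremePoints_convexHull_subset hv
  rcases hvS with rfl | ⟨u, hu, _, rfl⟩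
  · refine ⟨⟨1, by norm_num⟩, fun j => ?_⟩
    rcases hb j with h | h
    · exact ⟨0, by simp [h]⟩
    · exact ⟨1, by simp [h]⟩
  · refine ⟨⟨0, by norm_num⟩, fun j => ?_⟩
    rcases hu j with h | h
    · exact ⟨0, by simp [h]⟩
    · exact ⟨1, by simp [h]⟩
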